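/- Let L ≥ 2 and n ≥ 2 be integers. For every m with L^{n−1} ≤ m ≤ ⌊L^n/2⌋, ξ_m(K_L^n) ≥ ξ_{L^{n−1}}(K_L^n) = (L−1)L^{n−1}. -/
import Mathlib


/-- The base-`L` digit of `m` at position `j`, as an integer. -/
def dig (L m j : ℕ) : ℤ := ((Nat.digits L m).getD j 0 : ℤ)

/-- `ex_m(K_L^n)`: twice the maximum number of edges of an induced subgraph on `m`
vertices of the Hamming graph `K_L^n`, given by the explicit base-`L` formula
(it does not depend on `n`). -/
def exm (L m : ℕ) : ℤ :=
  (∑ j ∈ Finset.range (Nat.digits L m).length,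
    (((L : ℤ) - 1) * dig L m j * j * (L : ℤ) ^ j + (dig L m j - 1) * dig L m j * (L : ℤ) ^ j))
  + 2 * ∑ j ∈ Finset.range (Nat.digits L m).length, ∑ j' ∈ Finset.range j,
      dig L m j * dig L m j' * (L : ℤ) ^ j'

lemma dig_eq (L : ℕ) (hL : 2 ≤ L) (j : ℕ) : ∀ m : ℕ, dig L m j = ((m / L ^ j % L : ℕ) : ℤ) := by
  induction j with
  | zero =>
    intro m
    rcases Nat.eq_zero_or_pos m with h | h
    · subst h; simp [dig]
    · rw [dig, Nat.digits_def' (by omega : 1 < L) h]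
      simp
  | succ j ih =>
    intro m
    rcases Nat.eq_zero_or_pos m with h | h
    · subst h; simp [dig]
    · rw [dig, Nat.digits_def' (by omega : 1 < L) h]
      simp only [List.getD_cons_succ]
      have := ih (m / L)
      rw [dig] at this
      rw [this]
      congr 2
      rw [Nat.div_div_eq_div_mul, pow_succ]
      ring_nf

lemma dig_nonneg (L m j : ℕ) (hL : 2 ≤ L) : 0 ≤ dig L m j := by
  rw [dig_eq L hL]; positivity

lemma dig_lt (L m j : ℕ) (hL : 2 ≤ L) : dig L m j < L := by
  rw [dig_eq L hL]
  exact_mod_cast Nat.mod_lt _ (by omega)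


def exm' (L N m : ℕ) : ℤ :=
  (∑ j ∈ Finset.range N,
    (((L : ℤ) - 1) * dig L m j * j * (L : ℤ) ^ j + (dig L m j - 1) * dig L m j * (L : ℤ) ^ j))
  + 2 * ∑ j ∈ Finset.range N, ∑ j' ∈ Finset.range j,
      dig L m j * dig L m j' * (L : ℤ) ^ j'

lemma dig_of_len_le (L m j : ℕ) (h : (Nat.digits L m).length ≤ j) : dig L m j = 0 := by
  rw [dig, List.getD_eq_default _ _ h]; simp

lemma exm_eq_exm' (L N m : ℕ) (hL : 2 ≤ L) (h : m < L ^ N) : exm L m = exm' L N m := by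
  have hlen : (Nat.digits L m).length ≤ N := by
    rcases Nat.eq_zero_or_pos m with h0 | h0
    · subst h0; simp
    · rw [Nat.digits_len L m (by omega) (by omega)]
      have := Nat.log_lt_of_lt_pow (by omega : m ≠ 0) h
      omega
  rw [exm, exm']
  congr 1
  · refine Finset.sum_subset (Finset.range_subset_range.2 hlen) (fun j _ hj => ?_)
    have hjl : (Nat.digits L m).length ≤ j := by
      simp only [Finset.mem_range, not_lt] at hj; exact hj
    rw [dig_of_len_le L m j hjl]
    ring
  · congr 1
    refine Finset.sum_subset (Finset.range_subset_range.2 hlen) (fun j _ hj => ?_)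
    have hjl : (Nat.digits L m).length ≤ j := by
      simp only [Finset.mem_range, not_lt] at hj; exact hj
    refine Finset.sum_eq_zero (fun j' _ => ?_)
    rw [dig_of_len_le L m j hjl]
    ring

lemma sum_div_mod (L : ℕ) (hL : 2 ≤ L) : ∀ (K s : ℕ), s < L ^ K →
    ∑ j ∈ Finset.range K, s / L ^ j % L * L ^ j = s := by
  intro K
  induction K with
  | zero =>
    intro s hs
    have : s = 0 := by simpa [Nat.lt_one_iff] using hs
    subst this; simp
  | succ K ih =>
    intro s hs
    rw [Finset.sum_range_succ']
    have h1 : ∀ i : ℕ, s / L ^ (i + 1) % L * L ^ (i + 1)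
        = L * ((s / L) / L ^ i % L * L ^ i) := by
      intro i
      rw [Nat.div_div_eq_div_mul, pow_succ, mul_comm (L ^ i) L]
      ring
    simp only [h1]
    rw [← Finset.mul_sum, ih (s / L) (by
      rw [Nat.div_lt_iff_lt_mul (by omega : 0 < L)]
      calc s < L ^ (K + 1) := hs
        _ = L ^ K * L := pow_succ L K)]
    have h0 : s / L ^ 0 % L * L ^ 0 = s % L := by simp
    rw [h0]
    exact Nat.div_add_mod s L

lemma dig_low (L a K s j : ℕ) (hL : 2 ≤ L) (hs : s < L ^ K) (hj : j < K) :
    dig L (a * L ^ K + s) j = dig L s j := by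
  rw [dig_eq L hL, dig_eq L hL]
  have h1 : a * L ^ K = a * L ^ (K - j - 1) * L * L ^ j := by
    rw [mul_assoc, mul_assoc, ← pow_succ', ← pow_add]
    congr 2
    omega
  rw [h1, add_comm (a * L ^ (K - j - 1) * L * L ^ j) s,
    Nat.add_mul_div_right _ _ (pow_pos (by omega : 0 < L) j),
    Nat.add_mul_mod_self_right]

lemma dig_top (L a K s : ℕ) (hL : 2 ≤ L) (ha : a < L) (hs : s < L ^ K) :
    dig L (a * L ^ K + s) K = (a : ℤ) := by
  rw [dig_eq L hL, add_comm,
    Nat.add_mul_div_right _ _ (pow_pos (by omega : 0 < L) K),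
    Nat.div_eq_of_lt hs]
  simp [Nat.mod_eq_of_lt ha]

lemma dig_high (L s K : ℕ) (hL : 2 ≤ L) (hs : s < L ^ K) : dig L s K = 0 := by
  rw [dig_eq L hL, Nat.div_eq_of_lt hs]
  simp

lemma exm_rec (L a K s : ℕ) (hL : 2 ≤ L) (ha : a < L) (hs : s < L ^ K) :
    exm L (a * L ^ K + s) =
      exm L s + ((L : ℤ) - 1) * a * K * (L : ℤ) ^ K + ((a : ℤ) - 1) * a * (L : ℤ) ^ K
        + 2 * a * s := by
  have hLK : 0 < L ^ K := by positivity
  have haL : (a + 1) * L ^ K ≤ L ^ (K + 1) := by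
    rw [pow_succ, mul_comm (L ^ K) L]
    exact Nat.mul_le_mul_right _ (by omega)
  have hm : a * L ^ K + s < L ^ (K + 1) := by nlinarith
  have hs' : s < L ^ (K + 1) := lt_of_lt_of_le hs (Nat.pow_le_pow_right (by omega) (by omega))
  rw [exm_eq_exm' L (K+1) _ hL hm, exm_eq_exm' L (K+1) s hL hs']
  rw [exm', exm']
  rw [Finset.sum_range_succ, Finset.sum_range_succ, Finset.sum_range_succ,
    Finset.sum_range_succ]
  have e1 : ∀ j ∈ Finset.range K, (((L : ℤ) - 1) * dig L (a * L ^ K + s) j * j * (L : ℤ) ^ j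
      + (dig L (a * L ^ K + s) j - 1) * dig L (a * L ^ K + s) j * (L : ℤ) ^ j)
      = (((L : ℤ) - 1) * dig L s j * j * (L : ℤ) ^ j
      + (dig L s j - 1) * dig L s j * (L : ℤ) ^ j) := by
    intro j hj
    rw [dig_low L a K s j hL hs (Finset.mem_range.1 hj)]
  have e2 : ∀ j ∈ Finset.range K, (∑ j' ∈ Finset.range j,
      dig L (a * L ^ K + s) j * dig L (a * L ^ K + s) j' * (L : ℤ) ^ j')
      = ∑ j' ∈ Finset.range j, dig L s j * dig L s j' * (L : ℤ) ^ j' := by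
    intro j hj
    have hjK := Finset.mem_range.1 hj
    refine Finset.sum_congr rfl (fun j' hj' => ?_)
    rw [dig_low L a K s j hL hs hjK, dig_low L a K s j' hL hs (by
      have := Finset.mem_range.1 hj'; omega)]
  rw [Finset.sum_congr rfl e1, Finset.sum_congr rfl e2]
  rw [dig_top L a K s hL ha hs, dig_high L s K hL hs]
  have e3 : (∑ j' ∈ Finset.range K, (a : ℤ) * dig L (a * L ^ K + s) j' * (L : ℤ) ^ j')
      = (a : ℤ) * s := by
    have e4 : ∀ j' ∈ Finset.range K, (a : ℤ) * dig L (a * L ^ K + s) j' * (L : ℤ) ^ j'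
        = (a : ℤ) * ((s / L ^ j' % L * L ^ j' : ℕ) : ℤ) := by
      intro j' hj'
      rw [dig_low L a K s j' hL hs (Finset.mem_range.1 hj'), dig_eq L hL]
      push_cast
      ring
    rw [Finset.sum_congr rfl e4, ← Finset.mul_sum, ← Nat.cast_sum, sum_div_mod L hL K s hs]
  rw [e3]
  simp only [zero_mul, mul_zero, zero_add, add_zero, Finset.sum_const_zero]
  ring


/-- `ξ_m(K_L^n) = (L-1) n m - ex_m(K_L^n)`. -/
def xi (L n m : ℕ) : ℤ := ((L : ℤ) - 1) * n * m - exm L m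


lemma exm_zero (L : ℕ) : exm L 0 = 0 := by simp [exm]

lemma key1 (L a : ℕ) (P T : ℤ) (hL : 2 ≤ L) (ha : a < L) (hT : 0 ≤ T) (hTP : T < P) :
    0 ≤ ((L : ℤ) - 1) * T + (a : ℤ) * ((L : ℤ) - a) * P - 2 * a * T := by
  have haZ : (a : ℤ) < (L : ℤ) := by exact_mod_cast ha
  have haZ0 : 0 ≤ (a : ℤ) := by positivity
  have hP : 0 < P := lt_of_le_of_lt hT hTP
  rcases le_or_gt (2 * a + 1) L with h | h
  · have hZ : 2 * (a : ℤ) + 1 ≤ (L : ℤ) := by exact_mod_cast h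
    have h1 : (0:ℤ) ≤ ((L : ℤ) - 1 - 2 * a) * T := mul_nonneg (by linarith) hT
    have h2 : (0:ℤ) ≤ (a : ℤ) * ((L : ℤ) - a) * P :=
      mul_nonneg (mul_nonneg haZ0 (by linarith)) (by linarith)
    nlinarith [h1, h2]
  · have hZ : (L : ℤ) ≤ 2 * a := by exact_mod_cast Nat.lt_succ_iff.mp h
    have h1 : (0:ℤ) ≤ (2 * (a : ℤ) - L + 1) * (P - T) :=
      mul_nonneg (by linarith) (by linarith)
    have h2 : (0:ℤ) ≤ (((a : ℤ) + 1) * ((L : ℤ) - 1 - a)) * P :=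
      mul_nonneg (mul_nonneg (by linarith) (by linarith)) (by linarith)
    nlinarith [h1, h2]

lemma xi_lb (L n : ℕ) (hL : 2 ≤ L) : ∀ K : ℕ, ∀ s : ℕ, s < L ^ K →
    ((L : ℤ) - 1) * ((n : ℤ) - (K : ℤ)) * s ≤ xi L n s := by
  intro K
  induction K with
  | zero =>
    intro s hs
    have : s = 0 := by simpa [Nat.lt_one_iff] using hs
    subst this
    simp [xi, exm_zero]
  | succ K ih =>
    intro s hs
    have hLK : 0 < L ^ K := pow_pos (by omega) K
    obtain ⟨a, t, hst, ha, ht⟩ : ∃ a t, s = a * L ^ K + t ∧ a < L ∧ t < L ^ K := by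
      refine ⟨s / L ^ K, s % L ^ K, ?_, ?_, Nat.mod_lt _ hLK⟩
      · rw [mul_comm]; exact (Nat.div_add_mod s (L ^ K)).symm
      · rw [Nat.div_lt_iff_lt_mul hLK]
        calc s < L ^ (K + 1) := hs
          _ ≤ L * L ^ K := le_of_eq (pow_succ' L K)
    subst hst
    have hrec := exm_rec L a K t hL ha ht
    have hih := ih t ht
    have htZ : (t : ℤ) < (L : ℤ) ^ K := by exact_mod_cast ht
    have key := key1 L a ((L : ℤ) ^ K) (t : ℤ) hL ha (by positivity) htZ
    rw [xi] at hih ⊢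
    rw [hrec]
    push_cast
    push_cast at hih
    nlinarith [hih, key]

lemma key2 (L a : ℕ) (P R : ℤ) (hL : 2 ≤ L) (ha1 : 1 ≤ a) (ha2 : a < L)
    (hR : 0 ≤ R) (hP : 1 ≤ P) (hc : 2 * (a : ℤ) * P + 2 * R ≤ (L : ℤ) * P) :
    ((L : ℤ) - 1) * P ≤ ((L : ℤ) - 1) * R + (a : ℤ) * ((L : ℤ) - a) * P - 2 * a * R := by
  have haZ : (a : ℤ) < (L : ℤ) := by exact_mod_cast ha2
  have haZ1 : 1 ≤ (a : ℤ) := by exact_mod_cast ha1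
  rcases le_or_gt (2 * a + 1) L with h | h
  · have hZ : 2 * (a : ℤ) + 1 ≤ (L : ℤ) := by exact_mod_cast h
    have h1 : (0:ℤ) ≤ ((L : ℤ) - 1 - 2 * a) * R := mul_nonneg (by linarith) hR
    have h2 : (0:ℤ) ≤ (((a : ℤ) - 1) * ((L : ℤ) - 1 - a)) * P :=
      mul_nonneg (mul_nonneg (by linarith) (by linarith)) (by linarith)
    nlinarith [h1, h2]
  · have hZ : (L : ℤ) ≤ 2 * a := by exact_mod_cast Nat.lt_succ_iff.mp h
    rcases eq_or_lt_of_le hL with hL2 | hL3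
    · have ha : a = 1 := by omega
      have hLZ : (L : ℤ) = 2 := by exact_mod_cast hL2.symm
      subst ha
      rw [hLZ] at hc ⊢
      push_cast
      nlinarith [hc]
    · have hLZ3 : (3 : ℤ) ≤ (L : ℤ) := by exact_mod_cast hL3
      have h3 : (0:ℤ) ≤ (2 * (a : ℤ) - L + 1) * ((L : ℤ) * P - 2 * a * P - 2 * R) :=
        mul_nonneg (by linarith) (by linarith)
      have h4 : (0:ℤ) ≤ (2 * (a : ℤ) - L + 1) ^ 2 * P :=
        mul_nonneg (sq_nonneg _) (by linarith)
      have h5 : (0:ℤ) ≤ ((L : ℤ) - 1) * ((L : ℤ) - 3) * P :=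
        mul_nonneg (mul_nonneg (by linarith) (by linarith)) (by linarith)
      nlinarith [h3, h4, h5]

theorem stmt6 (L n : ℕ) (hL : 2 ≤ L) (hn : 2 ≤ n)
    (m : ℕ) (hm1 : L ^ (n - 1) ≤ m) (hm2 : m ≤ L ^ n / 2) :
    xi L n (L ^ (n - 1)) ≤ xi L n m ∧
      xi L n (L ^ (n - 1)) = ((L : ℤ) - 1) * (L : ℤ) ^ (n - 1) := by
  have hP : 0 < L ^ (n - 1) := pow_pos (by omega) _
  have hLn : L ^ n = L ^ (n - 1) * L := by
    rw [← pow_succ]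
    congr 1
    omega
  have hn1 : ((n - 1 : ℕ) : ℤ) = (n : ℤ) - 1 := by omega
  -- equality part
  have heq : xi L n (L ^ (n - 1)) = ((L : ℤ) - 1) * (L : ℤ) ^ (n - 1) := by
    have h0 : 1 * L ^ (n - 1) + 0 = L ^ (n - 1) := by ring
    have hrec := exm_rec L 1 (n - 1) 0 hL (by omega) (by positivity)
    rw [h0] at hrec
    rw [xi, hrec, exm_zero, hn1]
    push_cast
    ring
  refine ⟨?_, heq⟩
  -- inequality part
  have h2m : m * 2 ≤ L ^ n := (Nat.le_div_iff_mul_le (by omega)).1 hm2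
  set a := m / L ^ (n - 1) with ha_def
  set r := m % L ^ (n - 1) with hr_def
  have hm_eq : m = a * L ^ (n - 1) + r := by
    rw [ha_def, hr_def, mul_comm]
    exact (Nat.div_add_mod m (L ^ (n - 1))).symm
  have hr : r < L ^ (n - 1) := Nat.mod_lt _ hP
  have ha1 : 1 ≤ a := (Nat.one_le_div_iff hP).2 hm1
  have hmLn : m < L ^ n := by omega
  have ha2 : a < L := by
    rw [ha_def, Nat.div_lt_iff_lt_mul hP, mul_comm]
    omega
  have hrec := exm_rec L a (n - 1) r hL ha2 hr
  have hlb := xi_lb L n hL (n - 1) r hr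
  rw [xi] at hlb
  have key := key2 L a ((L : ℤ) ^ (n - 1)) (r : ℤ) hL ha1 ha2 (by positivity)
    (by exact_mod_cast hP) (by
      have : (m : ℤ) * 2 ≤ ((L : ℤ)) ^ n := by exact_mod_cast h2m
      have hmz : (m : ℤ) = a * (L : ℤ) ^ (n - 1) + r := by exact_mod_cast hm_eq
      have hLnz : (L : ℤ) ^ n = (L : ℤ) ^ (n - 1) * (L : ℤ) := by exact_mod_cast hLn
      rw [hmz, hLnz] at this
      linarith)
  rw [heq, xi, hm_eq]
  rw [hrec]
  simp only [hn1] at hlb ⊢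
  push_cast at hlb ⊢
  nlinarith [hlb, key]
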